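/- Suppose a function f : ℝ^{n₀} → ℝ^{m} factors as f(x) = Y σ(U x + b) + c where σ is elementwise slope-restricted in [0,1], and there exists a positive diagonal matrix Λ and γ > 0 such that the block matrix [[γI, -UᵀΛ, 0], [-ΛU, 2Λ, -Yᵀ], [0, -Y, γI]] is positive semidefinite. Then f is γ-Lipschitz: ‖f(x₁) - f(x₂)‖ ≤ γ‖x₁ - x₂‖ for all x₁, x₂. -/

import Mathlib

open Matrix

theorem sdp_lipschitz_certificate (n₀ h m : ℕ) (σ : ℝ → ℝ)
    (hσ : ∀ u v : ℝ, u ≠ v → 0 ≤ (σ u - σ v) / (u - v) ∧ (σ u - σ v) / (u - v) ≤ 1)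
    (U : Matrix (Fin h) (Fin n₀) ℝ) (Y : Matrix (Fin m) (Fin h) ℝ)
    (b : Fin h → ℝ) (c : Fin m → ℝ)
    (f : EuclideanSpace ℝ (Fin n₀) → EuclideanSpace ℝ (Fin m))
    (hf : ∀ x, f x = fun i => (Y.mulVec (fun j => σ (U.mulVec x j + b j)) i + c i))
    (γ : ℝ) (hγ : 0 < γ) (lam : Fin h → ℝ) (hlam : ∀ i, 0 < lam i)
    (hpsd : (Matrix.fromBlocks
        (Matrix.fromBlocks (γ • (1 : Matrix (Fin n₀) (Fin n₀) ℝ))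
          (-(Uᵀ * Matrix.diagonal lam)) (-(Matrix.diagonal lam * U))
          (2 • Matrix.diagonal lam))
        (Matrix.fromRows (0 : Matrix (Fin n₀) (Fin m) ℝ) (-Yᵀ))
        (Matrix.fromCols (0 : Matrix (Fin m) (Fin n₀) ℝ) (-Y))
        (γ • (1 : Matrix (Fin m) (Fin m) ℝ))).PosSemidef) :
    ∀ x₁ x₂ : EuclideanSpace ℝ (Fin n₀), ‖f x₁ - f x₂‖ ≤ γ * ‖x₁ - x₂‖ := by
  intro x₁ x₂
  set Δx : Fin n₀ → ℝ := fun i => x₁ i - x₂ i with hΔx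
  set z : Fin h → ℝ := fun j => σ (U.mulVec x₁ j + b j) - σ (U.mulVec x₂ j + b j) with hz
  set p : Fin h → ℝ := U *ᵥ Δx with hp
  set q : Fin m → ℝ := Y *ᵥ z with hq
  -- slope restriction: z j * z j ≤ z j * p j
  have hzp : ∀ j, z j * z j ≤ z j * p j := by
    intro j
    have hpj : p j = (U.mulVec x₁ j + b j) - (U.mulVec x₂ j + b j) := by
      simp only [hp, hΔx, Matrix.mulVec, dotProduct, mul_sub, Finset.sum_sub_distrib]
      ring
    set u := U.mulVec x₁ j + b j
    set v := U.mulVec x₂ j + b j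
    have hzj0 : z j = σ u - σ v := rfl
    rcases eq_or_ne u v with he | hne
    · simp [hzj0, he, hpj]
    · obtain ⟨h0, h1⟩ := hσ u v hne
      have hd : u - v ≠ 0 := sub_ne_zero.mpr hne
      have hzj : z j = ((σ u - σ v) / (u - v)) * (u - v) := by
        rw [hzj0]; field_simp
      rw [hzj, hpj]
      set s := (σ u - σ v) / (u - v)
      nlinarith [sq_nonneg (u - v), mul_nonneg h0 (mul_nonneg (sub_nonneg.mpr h1) (sq_nonneg (u - v)))]
  -- the quadratic form inequality
  have hQ := hpsd.dotProduct_mulVec_nonneg ((Δx ⊕ᵥ z) ⊕ᵥ (γ⁻¹ • q))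
  simp only [star_trivial, fromBlocks_mulVec, fromRows_mulVec, fromCols_mulVec_sumElim,
    Sum.elim_comp_inl, Sum.elim_comp_inr, sumElim_dotProduct_sumElim,
    Matrix.zero_mulVec, zero_add, add_zero, Matrix.neg_mulVec, Matrix.mulVec_smul,
    Matrix.one_mulVec, Matrix.smul_mulVec, dotProduct_add, dotProduct_neg,
    dotProduct_smul, smul_dotProduct, dotProduct_zero] at hQ
  have T1 : Δx ⬝ᵥ (Uᵀ * Matrix.diagonal lam) *ᵥ z = ∑ j, p j * (lam j * z j) := by
    rw [← Matrix.mulVec_mulVec, Matrix.dotProduct_mulVec, Matrix.vecMul_transpose]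
    simp [dotProduct, Matrix.mulVec_diagonal, hp]
  have T2 : z ⬝ᵥ (Matrix.diagonal lam * U) *ᵥ Δx = ∑ j, z j * (lam j * p j) := by
    rw [← Matrix.mulVec_mulVec]
    simp [dotProduct, Matrix.mulVec_diagonal, hp]
  have T3 : z ⬝ᵥ Matrix.diagonal lam *ᵥ z = ∑ j, z j * (lam j * z j) := by
    simp [dotProduct, Matrix.mulVec_diagonal]
  have T4 : z ⬝ᵥ Yᵀ *ᵥ Y *ᵥ z = q ⬝ᵥ q := by
    rw [Matrix.dotProduct_mulVec, Matrix.vecMul_transpose, hq]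
  rw [T1, T2, T3, T4] at hQ
  -- sum comparison from slope restriction
  have hsum : ∑ j, z j * (lam j * z j) ≤ ∑ j, z j * (lam j * p j) := by
    apply Finset.sum_le_sum
    intro j _
    have := hzp j
    have hl := (hlam j).le
    nlinarith
  have hsum' : (∑ j, p j * (lam j * z j)) = ∑ j, z j * (lam j * p j) := by
    apply Finset.sum_congr rfl
    intro j _
    ring
  rw [hsum'] at hQ
  have hqq : 0 ≤ q ⬝ᵥ q := by
    simp only [dotProduct]
    exact Finset.sum_nonneg fun i _ => mul_self_nonneg _
  have hXX : 0 ≤ Δx ⬝ᵥ Δx := by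
    simp only [dotProduct]
    exact Finset.sum_nonneg fun i _ => mul_self_nonneg _
  -- key scalar inequality: q ⬝ᵥ q ≤ γ^2 * (Δx ⬝ᵥ Δx)
  have key : q ⬝ᵥ q ≤ γ ^ 2 * (Δx ⬝ᵥ Δx) := by
    have hγ' : γ⁻¹ * γ = 1 := inv_mul_cancel₀ hγ.ne'
    simp only [smul_eq_mul, nsmul_eq_mul, Nat.cast_ofNat] at hQ
    rw [show Y *ᵥ z = q from hq.symm] at hQ
    have hcanc : γ⁻¹ * (γ * (γ⁻¹ * (q ⬝ᵥ q))) = γ⁻¹ * (q ⬝ᵥ q) := by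
      field_simp
    have h2 : 0 ≤ γ * (Δx ⬝ᵥ Δx) - γ⁻¹ * (q ⬝ᵥ q) := by linarith [hQ, hcanc, hsum]
    calc q ⬝ᵥ q = γ * (γ⁻¹ * (q ⬝ᵥ q)) := by field_simp
      _ ≤ γ * (γ * (Δx ⬝ᵥ Δx)) :=
          mul_le_mul_of_nonneg_left (by linarith) hγ.le
      _ = γ ^ 2 * (Δx ⬝ᵥ Δx) := by ring
  -- translate to norms
  have hnf : ‖f x₁ - f x₂‖ ^ 2 = q ⬝ᵥ q := by
    have hfd : ∀ i, (f x₁ - f x₂) i = q i := by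
      intro i
      have e1 : (f x₁ - f x₂) i = f x₁ i - f x₂ i := rfl
      rw [e1, hf x₁, hf x₂]
      simp only [hq, hz, Matrix.mulVec, dotProduct, mul_sub, Finset.sum_sub_distrib]
      ring
    rw [EuclideanSpace.norm_eq, Real.sq_sqrt (by positivity)]
    simp only [dotProduct, hfd, Real.norm_eq_abs, sq_abs]
    exact Finset.sum_congr rfl fun i _ => pow_two _
  have hnx : ‖x₁ - x₂‖ ^ 2 = Δx ⬝ᵥ Δx := by
    have hfd : ∀ i, (x₁ - x₂) i = Δx i := fun i => rfl
    rw [EuclideanSpace.norm_eq, Real.sq_sqrt (by positivity)]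
    simp only [dotProduct, hfd, Real.norm_eq_abs, sq_abs]
    exact Finset.sum_congr rfl fun i _ => pow_two _
  have hsq : ‖f x₁ - f x₂‖ ^ 2 ≤ (γ * ‖x₁ - x₂‖) ^ 2 := by
    rw [hnf, mul_pow, hnx]
    exact key
  have := Real.sqrt_le_sqrt hsq
  rwa [Real.sqrt_sq (norm_nonneg _), Real.sqrt_sq (by positivity)] at this
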